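/- Let μ be an atomless probability measure on ℝ, let Y_1,…,Y_N be i.i.d. random variables with law μ, let k be a natural number with k < N, and let Y_{(N−k)} denote the (N−k)-th order statistic of Y_1,…,Y_N. Then the expected coverage satisfies E[μ((−∞, Y_{(N−k)}])] = (N−k)/(N+1), where the expectation is taken under the product measure μ^⊗N. -/

import Mathlib

open MeasureTheory Finset

/-- The `(N-k)`-th order statistic (1-indexed) of `y : Fin N → ℝ`: the value in
position `N-k` when `y₁, …, y_N` are sorted in nondecreasing order (counting
multiplicity). -/
noncomputable def orderStat {N : ℕ} (k : ℕ) (y : Fin N → ℝ) : ℝ :=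
  ((Multiset.map y Finset.univ.val).sort (· ≤ ·)).getD (N - k - 1) 0

open scoped ENNReal

section Aux

lemma sorted_le_getD_iff {l : List ℝ} (hl : l.Pairwise (· ≤ ·)) {d : ℕ} (hd : d < l.length)
    (t : ℝ) : t ≤ l.getD d 0 ↔ l.countP (fun a => a < t) ≤ d := by
  rw [List.getD_eq_getElem l 0 hd]
  constructor
  · intro h
    have hsplit : l.countP (fun a => a < t) =
        (l.take d).countP (fun a => a < t) + (l.drop d).countP (fun a => a < t) := by
      conv_lhs => rw [← List.take_append_drop d l]
      rw [List.countP_append]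
    have hdrop : (l.drop d).countP (fun a => a < t) = 0 := by
      rw [List.countP_eq_zero]
      intro a ha
      obtain ⟨j, hj, rfl⟩ := List.mem_iff_getElem.1 ha
      have hdj : d + j < l.length := by
        have := hj; rw [List.length_drop] at this; omega
      rw [List.getElem_drop]
      have : l[d] ≤ l[d + j]'hdj := by
        rcases Nat.eq_zero_or_pos j with h0 | h0
        · simp [h0]
        · exact List.pairwise_iff_getElem.1 hl d (d + j) hd hdj (by omega)
      simp only [decide_eq_true_eq]
      push_neg
      linarith
    rw [hsplit, hdrop]
    calc (l.take d).countP (fun a => a < t) ≤ (l.take d).length := List.countP_le_length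
      _ ≤ d := by simp
  · intro h
    by_contra hlt
    push_neg at hlt
    have htake : (l.take (d+1)).countP (fun a => a < t) = (l.take (d+1)).length := by
      rw [List.countP_eq_length]
      intro a ha
      obtain ⟨j, hj, rfl⟩ := List.mem_iff_getElem.1 ha
      have hjd : j ≤ d := by
        have := hj; rw [List.length_take] at this; omega
      have hjl : j < l.length := by omega
      rw [List.getElem_take]
      have : l[j]'hjl ≤ l[d] := by
        rcases eq_or_lt_of_le hjd with h0 | h0
        · subst h0; rfl
        · exact List.pairwise_iff_getElem.1 hl j d hjl hd h0
      simp only [decide_eq_true_eq]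
      linarith
    have hlen : (l.take (d+1)).length = d + 1 := by simp; omega
    have : d + 1 ≤ l.countP (fun a => a < t) := by
      conv_rhs => rw [← List.take_append_drop (d+1) l]
      rw [List.countP_append, htake, hlen]
      omega
    omega

lemma le_orderStat_iff {N k : ℕ} (hk : k < N) (y : Fin N → ℝ) (t : ℝ) :
    t ≤ orderStat k y ↔ (univ.filter fun i => y i < t).card < N - k := by
  set l := ((Multiset.map y Finset.univ.val).sort (· ≤ ·)) with hldef
  have hlen : l.length = N := by
    rw [hldef, Multiset.length_sort, Multiset.card_map]
    simp
  have hd : N - k - 1 < l.length := by omega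
  have hsorted : l.Pairwise (· ≤ ·) := Multiset.pairwise_sort _ _
  rw [orderStat, ← hldef, sorted_le_getD_iff hsorted hd]
  have hcount : l.countP (fun a => a < t) = (univ.filter fun i => y i < t).card := by
    have h1 : Multiset.countP (fun a => a < t) (l : Multiset ℝ) = l.countP (fun a => a < t) :=
      Multiset.coe_countP _ _
    rw [← h1, hldef, Multiset.sort_eq, Multiset.countP_map]
    rfl
  rw [hcount]
  omega

/-- Number of coordinates of `w` strictly smaller than `w i`. -/
noncomputable def rankCount {M : ℕ} (w : Fin M → ℝ) (i : Fin M) : ℕ :=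
  (univ.filter fun j => w j < w i).card

lemma rankCount_lt_of_lt {M : ℕ} {w : Fin M → ℝ} {i j : Fin M} (h : w i < w j) :
    rankCount w i < rankCount w j := by
  apply Finset.card_lt_card
  constructor
  · intro a ha
    simp only [mem_filter, mem_univ, true_and] at *
    linarith
  · intro hsub
    have hi : i ∈ univ.filter fun a => w a < w j := by simp [h]
    have := hsub hi
    simp at this

lemma rankCount_le {M : ℕ} (w : Fin (M + 1) → ℝ) (i : Fin (M + 1)) :
    rankCount w i ≤ M := by
  have hsub : (univ.filter fun j => w j < w i) ⊆ univ.erase i := by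
    intro a ha
    simp only [mem_filter, mem_univ, true_and] at ha
    apply Finset.mem_erase.2
    refine ⟨fun h => ?_, mem_univ a⟩
    subst h; exact lt_irrefl _ ha
  calc (univ.filter fun j => w j < w i).card ≤ (univ.erase i).card := Finset.card_le_card hsub
    _ = M := by rw [Finset.card_erase_of_mem (mem_univ i)]; simp

lemma rankCount_injective {M : ℕ} {w : Fin M → ℝ} (hw : Function.Injective w) :
    Function.Injective (rankCount w) := by
  intro i j hij
  by_contra hne
  have hwne : w i ≠ w j := fun h => hne (hw h)
  rcases lt_or_gt_of_ne hwne with h | h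
  · exact absurd hij (Nat.ne_of_lt (rankCount_lt_of_lt h))
  · exact absurd hij.symm (Nat.ne_of_lt (rankCount_lt_of_lt h))

lemma rankCount_surj {M : ℕ} {w : Fin (M + 1) → ℝ} (hw : Function.Injective w)
    (m : ℕ) (hm : m ≤ M) : ∃ i, rankCount w i = m := by
  let f : Fin (M + 1) → Fin (M + 1) := fun i => ⟨rankCount w i, by
    have := rankCount_le w i; omega⟩
  have hf : Function.Injective f := by
    intro i j h
    exact rankCount_injective hw (congrArg Fin.val h)
  have hsurj := Finite.surjective_of_injective hf
  obtain ⟨i, hi⟩ := hsurj ⟨m, by omega⟩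
  exact ⟨i, congrArg Fin.val hi⟩

lemma measurable_rankCount {M : ℕ} (i : Fin M) :
    Measurable (fun w : Fin M → ℝ => rankCount w i) := by
  have h : (fun w : Fin M → ℝ => rankCount w i)
      = fun w => ∑ j : Fin M, if w j < w i then 1 else 0 := by
    funext w
    rw [rankCount, Finset.card_filter]
  rw [h]
  apply Finset.measurable_sum
  intro j _
  exact Measurable.ite (measurableSet_lt (measurable_pi_apply j) (measurable_pi_apply i))
    measurable_const measurable_const

lemma rankCount_comp_perm {M : ℕ} (w : Fin M → ℝ) (σ : Equiv.Perm (Fin M)) (i : Fin M) :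
    rankCount (w ∘ σ) i = rankCount w (σ i) := by
  simp only [rankCount, Finset.card_filter, Function.comp]
  exact Fintype.sum_equiv σ _ _ (fun j => rfl)

lemma rankCount_zero_tail {N : ℕ} (w : Fin (N + 1) → ℝ) :
    rankCount w 0 = (univ.filter fun i : Fin N => Fin.tail w i < w 0).card := by
  rw [rankCount, Finset.card_filter, Finset.card_filter, Fin.sum_univ_succ]
  simp [Fin.tail]
  exact Finset.card_filter _ _

lemma pi_comp_perm_preserving (μ : Measure ℝ) [SigmaFinite μ] {M : ℕ} (σ : Equiv.Perm (Fin M)) :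
    MeasurePreserving (fun w : Fin M → ℝ => w ∘ σ)
      (Measure.pi fun _ => μ) (Measure.pi fun _ => μ) := by
  have h := measurePreserving_piCongrLeft (fun _ : Fin M => μ) σ.symm
  have heq : (fun w : Fin M → ℝ => w ∘ σ)
      = ⇑(MeasurableEquiv.piCongrLeft (fun _ : Fin M => ℝ) σ.symm) := by
    funext w; ext i
    simp [MeasurableEquiv.piCongrLeft, Equiv.piCongrLeft, Equiv.piCongrLeft']
  rw [heq]; exact h

lemma pi_eq_coords_null (μ : Measure ℝ) [IsProbabilityMeasure μ] [NullSingletonClass μ] {M : ℕ}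
    {i j : Fin (M + 1)} (hij : i ≠ j) :
    Measure.pi (fun _ : Fin (M + 1) => μ) {w | w i = w j} = 0 := by
  obtain ⟨j', hj'⟩ := Fin.exists_succAbove_eq hij.symm
  have he := measurePreserving_piFinSuccAbove (fun _ : Fin (M + 1) => μ) i
  have hS : MeasurableSet {p : ℝ × (Fin M → ℝ) | p.1 = p.2 j'} :=
    measurableSet_eq_fun measurable_fst ((measurable_pi_apply j').comp measurable_snd)
  have hpre : {w : Fin (M + 1) → ℝ | w i = w j}
      = (MeasurableEquiv.piFinSuccAbove (fun _ : Fin (M + 1) => ℝ) i) ⁻¹'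
        {p | p.1 = p.2 j'} := by
    ext w
    simp only [Set.mem_preimage, Set.mem_setOf_eq, MeasurableEquiv.piFinSuccAbove_apply,
      Fin.insertNthEquiv, Equiv.coe_fn_symm_mk]
    rw [← hj']
    simp [Fin.removeNth]
  rw [hpre, he.measure_preimage hS.nullMeasurableSet, Measure.prod_apply hS]
  have hz : ∀ x : ℝ, (Measure.pi fun _ : Fin M => μ) {v : Fin M → ℝ | x = v j'} = 0 := by
    intro x
    rw [show {v : Fin M → ℝ | x = v j'} = {v | v j' = x} from by ext v; exact eq_comm]
    exact Measure.pi_hyperplane (fun _ : Fin M => μ) j' x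
  have hpre2 : ∀ x : ℝ, (Prod.mk x ⁻¹' {p : ℝ × (Fin M → ℝ) | p.1 = p.2 j'})
      = {v : Fin M → ℝ | x = v j'} := fun x => rfl
  simp only [hpre2, hz, lintegral_zero]

lemma injective_measurableSet {M : ℕ} :
    MeasurableSet {w : Fin M → ℝ | Function.Injective w} := by
  have h : {w : Fin M → ℝ | Function.Injective w}
      = ⋂ i, ⋂ j, {w : Fin M → ℝ | w i = w j → i = j} := by
    ext w
    simp only [Set.mem_iInter, Set.mem_setOf_eq]
    exact ⟨fun h i j => fun hij => h hij, fun h a b hab => h a b hab⟩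
  rw [h]
  refine MeasurableSet.iInter fun i => MeasurableSet.iInter fun j => ?_
  by_cases hij : i = j
  · subst hij
    have : {w : Fin M → ℝ | w i = w i → i = i} = Set.univ := by ext w; simp
    rw [this]; exact MeasurableSet.univ
  · have : {w : Fin M → ℝ | w i = w j → i = j} = {w : Fin M → ℝ | w i = w j}ᶜ := by
      ext w; simp [hij]
    rw [this]
    exact (measurableSet_eq_fun (measurable_pi_apply i) (measurable_pi_apply j)).compl

lemma injective_compl_null (μ : Measure ℝ) [IsProbabilityMeasure μ] [NullSingletonClass μ] (M : ℕ) :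
    Measure.pi (fun _ : Fin (M + 1) => μ) {w | Function.Injective w}ᶜ = 0 := by
  refine measure_mono_null (fun w hw => ?_)
    (t := ⋃ i, ⋃ j, {w : Fin (M+1) → ℝ | w i = w j ∧ i ≠ j}) ?_
  · simp only [Set.mem_compl_iff, Set.mem_setOf_eq, Function.Injective] at hw
    push_neg at hw
    obtain ⟨i, j, hij, hne⟩ := hw
    exact Set.mem_iUnion.2 ⟨i, Set.mem_iUnion.2 ⟨j, ⟨hij, hne⟩⟩⟩
  · refine measure_iUnion_null fun i => measure_iUnion_null fun j => ?_
    by_cases hij : i = j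
    · subst hij; simp
    · exact measure_mono_null (fun w hw => hw.1) (pi_eq_coords_null μ hij)

lemma rank_uniform (μ : Measure ℝ) [IsProbabilityMeasure μ] [NullSingletonClass μ] (N : ℕ)
    {m : ℕ} (hm : m ≤ N) :
    Measure.pi (fun _ : Fin (N + 1) => μ) {w | rankCount w 0 = m}
      = ((N : ℝ≥0∞) + 1)⁻¹ := by
  set π := Measure.pi (fun _ : Fin (N + 1) => μ) with hπ
  set D := {w : Fin (N + 1) → ℝ | Function.Injective w} with hD
  set A : Fin (N+1) → Set (Fin (N+1) → ℝ) := fun i => {w | rankCount w i = m} with hA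
  have hDmeas : MeasurableSet D := injective_measurableSet
  have hDc : π Dᶜ = 0 := injective_compl_null μ N
  have hAmeas : ∀ i, MeasurableSet (A i) := fun i =>
    (measurable_rankCount i) (measurableSet_singleton m)
  have hAeq : ∀ i, π (A i) = π (A 0) := by
    intro i
    have hmp := pi_comp_perm_preserving μ (Equiv.swap 0 i)
    have heq : A i = (fun w : Fin (N+1) → ℝ => w ∘ (Equiv.swap 0 i)) ⁻¹' (A 0) := by
      ext w
      simp only [Set.mem_preimage, hA, Set.mem_setOf_eq, rankCount_comp_perm,
        Equiv.swap_apply_left]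
    rw [heq, hmp.measure_preimage (hAmeas 0).nullMeasurableSet]
  have hdisj : Set.PairwiseDisjoint (↑(univ : Finset (Fin (N+1)))) (fun i => A i ∩ D) := by
    intro i _ j _ hij
    refine Set.disjoint_left.2 fun {w} hwi hwj => ?_
    exact hij ((rankCount_injective hwi.2) (hwi.1.trans hwj.1.symm))
  have hcover : (⋃ i ∈ (univ : Finset (Fin (N+1))), A i ∩ D) = D := by
    ext w
    simp only [Set.mem_iUnion, mem_univ, Set.mem_inter_iff, exists_prop, true_and, hA,
      Set.mem_setOf_eq]
    constructor
    · rintro ⟨i, _, hw⟩; exact hw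
    · intro hw
      obtain ⟨i, hi⟩ := rankCount_surj hw m hm
      exact ⟨i, hi, hw⟩
  have hD1 : π D = 1 := by
    have h := measure_add_measure_compl (μ := π) hDmeas
    rw [hDc, add_zero] at h
    rw [h]; exact measure_univ
  have hsum : ∑ i : Fin (N+1), π (A i ∩ D) = 1 := by
    rw [← measure_biUnion_finset hdisj (fun i _ => (hAmeas i).inter hDmeas), hcover, hD1]
  have hconst : ∀ i, π (A i ∩ D) = π (A 0) := fun i => by
    rw [measure_inter_conull hDc, hAeq i]
  rw [Finset.sum_congr rfl (fun i _ => hconst i), Finset.sum_const, Finset.card_univ,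
    Fintype.card_fin] at hsum
  have hmul : ((N : ℝ≥0∞) + 1) * π (A 0) = 1 := by
    rw [nsmul_eq_mul, Nat.cast_add, Nat.cast_one] at hsum
    exact hsum
  have hne : ((N : ℝ≥0∞) + 1) ≠ 0 := by simp
  have hnetop : ((N : ℝ≥0∞) + 1) ≠ ⊤ := by
    simp [ENNReal.add_ne_top]
  calc π (A 0) = ((N : ℝ≥0∞) + 1)⁻¹ * (((N : ℝ≥0∞) + 1) * π (A 0)) := by
        rw [← mul_assoc, ENNReal.inv_mul_cancel hne hnetop, one_mul]
    _ = ((N : ℝ≥0∞) + 1)⁻¹ := by rw [hmul, mul_one]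

end Aux

/-- for `N` i.i.d. samples from an atomless probability measure
`μ` on `ℝ`, the expected coverage of the conformal prediction set satisfies
`E[μ((-∞, Y_{(N-k)}])] = (N-k)/(N+1)`, the mean of `Beta(N-k, k+1)`. -/
theorem expected_conformal_coverage (μ : Measure ℝ) [IsProbabilityMeasure μ]
    [NullSingletonClass μ] (N k : ℕ) (hk : k < N) :
    ∫ Y, (μ (Set.Iic (orderStat k Y))).toReal
        ∂(Measure.pi (fun _ : Fin N => μ))
      = ((N : ℝ) - k) / ((N : ℝ) + 1) := by
  set ν := Measure.pi (fun _ : Fin N => μ) with hν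
  set π := Measure.pi (fun _ : Fin (N+1) => μ) with hπ
  set S : Set ((Fin N → ℝ) × ℝ) := {p | p.2 ≤ orderStat k p.1} with hS
  have hSeq : S = {p : (Fin N → ℝ) × ℝ |
      (univ.filter fun i => p.1 i < p.2).card < N - k} := by
    ext p
    exact le_orderStat_iff hk p.1 p.2
  have hcard_meas : Measurable
      (fun p : (Fin N → ℝ) × ℝ => (univ.filter fun i => p.1 i < p.2).card) := by
    have h : (fun p : (Fin N → ℝ) × ℝ => (univ.filter fun i => p.1 i < p.2).card)
        = fun p => ∑ i : Fin N, if p.1 i < p.2 then 1 else 0 := by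
      funext p; rw [Finset.card_filter]
    rw [h]
    exact Finset.measurable_sum _ fun i _ => Measurable.ite
      (measurableSet_lt (measurable_fst.eval) measurable_snd)
      measurable_const measurable_const
  have hSmeas : MeasurableSet S := by
    rw [hSeq]
    exact hcard_meas (measurableSet_Iio (a := N - k))
  have hord_meas : Measurable (orderStat k : (Fin N → ℝ) → ℝ) := by
    apply measurable_of_Ici
    intro t
    have h : (orderStat k : (Fin N → ℝ) → ℝ) ⁻¹' (Set.Ici t)
        = {y : Fin N → ℝ | (univ.filter fun i => y i < t).card < N - k} := by
      ext y
      exact le_orderStat_iff hk y t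
    rw [h]
    exact (hcard_meas.comp (measurable_id.prodMk measurable_const))
      (measurableSet_Iio (a := N - k))
  have hf_meas : Measurable (fun Y : Fin N → ℝ => μ (Set.Iic (orderStat k Y))) := by
    have hmono : Monotone (fun a : ℝ => μ (Set.Iic a)) :=
      fun a b hab => measure_mono (Set.Iic_subset_Iic.2 hab)
    exact hmono.measurable.comp hord_meas
  rw [MeasureTheory.integral_toReal hf_meas.aemeasurable
    (ae_of_all _ fun Y => measure_lt_top μ _)]
  have h1 : ∫⁻ Y, μ (Set.Iic (orderStat k Y)) ∂ν = (ν.prod μ) S := by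
    rw [Measure.prod_apply hSmeas]
    exact lintegral_congr fun Y => rfl
  have hF : MeasurePreserving (fun w : Fin (N+1) → ℝ => (Fin.tail w, w 0)) π (ν.prod μ) := by
    have ha := measurePreserving_piFinSuccAbove (fun _ : Fin (N+1) => μ) 0
    have hb : MeasurePreserving (Prod.swap : ℝ × (Fin N → ℝ) → (Fin N → ℝ) × ℝ)
        (μ.prod ν) (ν.prod μ) := Measure.measurePreserving_swap
    have hcomp := hb.comp ha
    have heq : (fun w : Fin (N+1) → ℝ => (Fin.tail w, w 0))
        = (Prod.swap : ℝ × (Fin N → ℝ) → (Fin N → ℝ) × ℝ)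
          ∘ ⇑(MeasurableEquiv.piFinSuccAbove (fun _ : Fin (N+1) => ℝ) 0) := by
      funext w
      simp only [Function.comp_apply, MeasurableEquiv.piFinSuccAbove_apply,
        Fin.insertNthEquiv, Equiv.coe_fn_symm_mk, Prod.swap_prod_mk, Fin.removeNth_zero]
    rw [heq]
    exact hcomp
  have h2 : (ν.prod μ) S = π ((fun w : Fin (N+1) → ℝ => (Fin.tail w, w 0)) ⁻¹' S) :=
    (hF.measure_preimage hSmeas.nullMeasurableSet).symm
  have h3 : ((fun w : Fin (N+1) → ℝ => (Fin.tail w, w 0)) ⁻¹' S)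
      = {w : Fin (N+1) → ℝ | rankCount w 0 < N - k} := by
    ext w
    simp only [Set.mem_preimage, hS, Set.mem_setOf_eq]
    rw [le_orderStat_iff hk, rankCount_zero_tail]
  have h4 : {w : Fin (N+1) → ℝ | rankCount w 0 < N - k}
      = ⋃ m ∈ Finset.range (N - k), {w : Fin (N+1) → ℝ | rankCount w 0 = m} := by
    ext w
    simp only [Set.mem_setOf_eq, Set.mem_iUnion, Finset.mem_range, exists_prop]
    constructor
    · intro hw; exact ⟨rankCount w 0, hw, rfl⟩
    · rintro ⟨m, hm, hw⟩; omega
  have h5 : π {w : Fin (N+1) → ℝ | rankCount w 0 < N - k}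
      = (N - k : ℕ) • ((N : ℝ≥0∞) + 1)⁻¹ := by
    rw [h4, measure_biUnion_finset]
    · rw [Finset.sum_congr rfl (fun m hm => rank_uniform μ N
        (by have := Finset.mem_range.1 hm; omega))]
      rw [Finset.sum_const, Finset.card_range]
    · intro m _ m' _ hmm'
      refine Set.disjoint_left.2 fun {w} hw hw' => ?_
      exact hmm' (hw.symm.trans hw')
    · intro m _
      exact (measurable_rankCount 0) (measurableSet_singleton m)
  rw [h1, h2, h3, h5]
  rw [nsmul_eq_mul, ENNReal.toReal_mul, ENNReal.toReal_natCast, ENNReal.toReal_inv]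
  have hcast : ((N : ℝ≥0∞) + 1).toReal = (N : ℝ) + 1 := by
    rw [ENNReal.toReal_add (by simp) (by simp)]
    simp
  rw [hcast, Nat.cast_sub hk.le]
  ring
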